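/- For every integer n ≥ 1, the n-th root of the sum appearing in Dobinski's formula is strictly smaller than the (n+1)-st root of the next sum: ((1/e)·∑_{k≥0} k^n/k!)^{1/n} < ((1/e)·∑_{k≥0} k^{n+1}/k!)^{1/(n+1)}. -/

import Mathlib

open Filter Topology

private lemma dob_summable (m : ℕ) :
    Summable (fun k : ℕ => (k : ℝ) ^ m / (Nat.factorial k : ℝ)) := by
  apply summable_of_ratio_norm_eventually_le (r := 1/2) (by norm_num)
  filter_upwards [eventually_ge_atTop (2 ^ (m + 1))] with k hk
  have hk1 : 1 ≤ k := le_trans (Nat.one_le_two_pow) hk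
  have hkpos : (0:ℝ) < k := by exact_mod_cast hk1
  have hfac : (0:ℝ) < (Nat.factorial k : ℝ) := by exact_mod_cast k.factorial_pos
  rw [Real.norm_eq_abs, Real.norm_eq_abs, abs_of_nonneg (by positivity),
    abs_of_nonneg (by positivity)]
  have h1 : ((k:ℝ) + 1) ^ m ≤ 2 ^ m * (k:ℝ) ^ m := by
    rw [← mul_pow]
    have h1k : (1:ℝ) ≤ (k:ℝ) := by exact_mod_cast hk1
    exact pow_le_pow_left₀ (by positivity) (by linarith) m
  have h2 : (2:ℝ) ^ (m+1) ≤ (k:ℝ) + 1 := by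
    have : ((2 ^ (m+1) : ℕ) : ℝ) ≤ (k:ℝ) := by exact_mod_cast hk
    push_cast at this
    linarith
  have hfac1 : (Nat.factorial (k+1) : ℝ) = ((k:ℝ)+1) * (Nat.factorial k : ℝ) := by
    rw [Nat.factorial_succ]; push_cast; ring
  push_cast
  rw [hfac1, mul_div_assoc', div_le_div_iff₀ (by positivity) (by positivity)]
  calc ((k:ℝ)+1) ^ m * (Nat.factorial k : ℝ)
      ≤ 2 ^ m * (k:ℝ) ^ m * (Nat.factorial k : ℝ) := by
        exact mul_le_mul_of_nonneg_right h1 hfac.le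
    _ ≤ 1/2 * (k:ℝ)^m * (((k:ℝ)+1) * (Nat.factorial k : ℝ)) := by
        have : (2:ℝ)^m * 2 ≤ (k:ℝ) + 1 := by
          rw [pow_succ] at h2; linarith
        have h3 := mul_le_mul_of_nonneg_right this
          (mul_nonneg (pow_nonneg hkpos.le m) hfac.le)
        nlinarith [h3]

private lemma dob_pos (m : ℕ) : 0 < ∑' k : ℕ, (k : ℝ) ^ m / (Nat.factorial k : ℝ) := by
  refine Summable.tsum_pos (dob_summable m) (fun k => by positivity) 1 ?_
  simp [Nat.factorial]

private lemma dob_CS (m : ℕ) :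
    (∑' k : ℕ, (k : ℝ) ^ (m+1) / (Nat.factorial k : ℝ)) ^ 2 ≤
      (∑' k : ℕ, (k : ℝ) ^ m / (Nat.factorial k : ℝ)) *
        ∑' k : ℕ, (k : ℝ) ^ (m+2) / (Nat.factorial k : ℝ) := by
  have h := (dob_summable (m+1)).hasSum.tendsto_sum_nat
  refine le_of_tendsto (h.pow 2) (Filter.Eventually.of_forall fun N => ?_)
  calc (∑ k ∈ Finset.range N, (k : ℝ) ^ (m+1) / (Nat.factorial k : ℝ)) ^ 2
      ≤ (∑ k ∈ Finset.range N, (k : ℝ) ^ m / (Nat.factorial k : ℝ)) *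
          ∑ k ∈ Finset.range N, (k : ℝ) ^ (m+2) / (Nat.factorial k : ℝ) := by
        refine Finset.sum_sq_le_sum_mul_sum_of_sq_eq_mul _
          (fun i _ => by positivity) (fun i _ => by positivity) (fun i _ => ?_)
        have : (Nat.factorial i : ℝ) ≠ 0 := by positivity
        field_simp
        ring
    _ ≤ _ := by
        refine mul_le_mul ?_ ?_ (Finset.sum_nonneg fun i _ => by positivity)
          (dob_pos m).le
        · exact Summable.sum_le_tsum _ (fun i _ => by positivity) (dob_summable m)
        · exact Summable.sum_le_tsum _ (fun i _ => by positivity) (dob_summable (m+2))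

private lemma dob_lt (m : ℕ) (hm : 1 ≤ m) :
    (∑' k : ℕ, (k : ℝ) ^ m / (Nat.factorial k : ℝ)) <
      ∑' k : ℕ, (k : ℝ) ^ (m+1) / (Nat.factorial k : ℝ) := by
  refine Summable.tsum_lt_tsum (i := 2) (fun k => ?_) ?_ (dob_summable m) (dob_summable (m+1))
  · rcases Nat.eq_zero_or_pos k with rfl | hk
    · simp [zero_pow (show m ≠ 0 by omega), zero_pow (show m + 1 ≠ 0 by omega)]
    · have h1 : (1:ℝ) ≤ (k:ℝ) := by exact_mod_cast hk
      gcongr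
      · omega
  · have h : (2:ℝ) ^ m < 2 ^ (m+1) := by
      exact pow_lt_pow_right₀ one_lt_two (by omega)
    have h2 : (0:ℝ) < (Nat.factorial 2 : ℝ) := by positivity
    push_cast
    exact (div_lt_div_iff_of_pos_right h2).mpr h

private lemma dob_zero : (∑' k : ℕ, (k : ℝ) ^ 0 / (Nat.factorial k : ℝ)) = Real.exp 1 := by
  rw [Real.exp_eq_exp_ℝ, NormedSpace.exp_eq_tsum_div]
  simp

private lemma dob_one : (∑' k : ℕ, (k : ℝ) ^ 1 / (Nat.factorial k : ℝ)) = Real.exp 1 := by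
  rw [← dob_zero, Summable.tsum_eq_zero_add (dob_summable 1)]
  simp only [Nat.cast_zero, pow_one, zero_div, zero_add]
  refine tsum_congr fun j => ?_
  have h1 : (Nat.factorial j : ℝ) ≠ 0 := by positivity
  have h2 : ((j:ℝ)+1) ≠ 0 := by positivity
  rw [pow_zero, Nat.factorial_succ]
  
  field_simp
  rw [Nat.cast_mul]

private noncomputable def dobS (m : ℕ) : ℝ := ∑' k : ℕ, (k : ℝ) ^ m / (Nat.factorial k : ℝ)

/-- For every integer `n ≥ 1`,
`((1/e) ∑_{k ≥ 0} k^n/k!)^{1/n} < ((1/e) ∑_{k ≥ 0} k^{n+1}/k!)^{1/(n+1)}`. -/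
theorem dobinski_sum_nthRoot_strictMono (n : ℕ) (hn : 1 ≤ n) :
    ((1 / Real.exp 1) * ∑' k : ℕ, (k : ℝ) ^ n / (Nat.factorial k : ℝ)) ^ ((1 : ℝ) / n) <
      ((1 / Real.exp 1) * ∑' k : ℕ, (k : ℝ) ^ (n + 1) / (Nat.factorial k : ℝ)) ^
        ((1 : ℝ) / (n + 1)) := by
  show (1 / Real.exp 1 * dobS n) ^ ((1 : ℝ) / n) <
    (1 / Real.exp 1 * dobS (n + 1)) ^ ((1 : ℝ) / (n + 1))
  have hSpos : ∀ m, 0 < dobS m := dob_pos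
  set L : ℕ → ℝ := fun m => Real.log (dobS m) with hLdef
  have hconv : ∀ m, L (m + 1) - L m ≤ L (m + 2) - L (m + 1) := by
    intro m
    have hCS : dobS (m + 1) ^ 2 ≤ dobS m * dobS (m + 2) := dob_CS m
    have h := Real.log_le_log (pow_pos (hSpos (m + 1)) 2) hCS
    rw [Real.log_pow, Real.log_mul (hSpos m).ne' (hSpos (m + 2)).ne'] at h
    simp only [hLdef]
    push_cast at h
    linarith
  have hd : Monotone fun m => L (m + 1) - L m :=
    monotone_nat_of_le_succ hconv
  have hL0 : L 0 = 1 := by simp only [hLdef]; rw [show dobS 0 = Real.exp 1 from dob_zero, Real.log_exp]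
  have hL1 : L 1 = 1 := by simp only [hLdef]; rw [show dobS 1 = Real.exp 1 from dob_one, Real.log_exp]
  have hdn : 0 < L (n + 1) - L n :=
    sub_pos.mpr (Real.log_lt_log (hSpos n) (dob_lt n hn))
  have htel : ∑ j ∈ Finset.range n, (L (j + 1) - L j) = L n - L 0 :=
    Finset.sum_range_sub L n
  have hsum_lt : ∑ j ∈ Finset.range n, (L (j + 1) - L j) < n * (L (n + 1) - L n) := by
    have h1 : ∑ j ∈ Finset.range n, (L (j + 1) - L j) <
        ∑ _j ∈ Finset.range n, (L (n + 1) - L n) := by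
      refine Finset.sum_lt_sum (fun i hi => hd (by
        simp only [Finset.mem_range] at hi; omega)) ⟨0, Finset.mem_range.mpr (by omega), ?_⟩
      rw [hL1, hL0]
      linarith
    simpa [Finset.sum_const, Finset.card_range, nsmul_eq_mul, mul_sub] using h1
  have key : L n - 1 < (n : ℝ) * (L (n + 1) - L n) := by
    rw [← hL0]; linarith [htel, hsum_lt]
  have hb1 : 0 < 1 / Real.exp 1 * dobS n := mul_pos (by positivity) (hSpos n)
  have hb2 : 0 < 1 / Real.exp 1 * dobS (n + 1) := mul_pos (by positivity) (hSpos (n + 1))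
  rw [Real.rpow_def_of_pos hb1, Real.rpow_def_of_pos hb2, Real.exp_lt_exp]
  have hlog : ∀ m, Real.log (1 / Real.exp 1 * dobS m) = L m - 1 := by
    intro m
    rw [Real.log_mul (by positivity) (hSpos m).ne', one_div, Real.log_inv, Real.log_exp]
    simp only [hLdef]; ring
  rw [hlog n, hlog (n + 1)]
  have hn0 : (0 : ℝ) < n := by exact_mod_cast hn
  rw [mul_one_div, mul_one_div, div_lt_div_iff₀ hn0 (by positivity)]
  
  nlinarith [key, hdn, hn0]
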